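/- Let α ∈ (0,1], t₀ > 0, and let a, b: [t₀,∞) → (0,∞) be continuous with ∫_{t₀}^{∞} s^{α-1}/b(s) ds = ∞ and ∫_{t₀}^{∞} s^{α-1}/a(s) ds = ∞. Suppose u: [t₀,∞) → ℝ is eventually positive, the functions a(t)D^α u(t) and b(t)D^α(a(t)D^α u(t)) are differentiable, and D^α(b(t)D^α(a(t)D^α u(t))) ≤ 0 and is not identically zero on any half-line. Then there exists t₁ ≥ t₀ such that for all t ≥ t₁ either (I) u(t) > 0, D^α u(t) > 0, D^α(a(t)D^α u(t)) > 0, or (II) u(t) > 0, D^α u(t) < 0, D^α(a(t)D^α u(t)) > 0. -/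

import Mathlib

open Real Filter Set Topology

/-- The Katugampola α-fractional derivative of a differentiable function. -/
noncomputable def katD (α : ℝ) (f : ℝ → ℝ) : ℝ → ℝ := fun t => t ^ (1 - α) * deriv f t

/-- If `f' ≤ h` on `(T₀,∞)` and the primitive of `h` tends to `-∞`, then `f → -∞`. -/
lemma decay_lemma (f h : ℝ → ℝ) (T₀ : ℝ)
    (hf : ∀ t > T₀, DifferentiableAt ℝ f t)
    (hh : ContinuousOn h (Set.Ici T₀))
    (hle : ∀ t > T₀, deriv f t ≤ h t)
    (hdiv : Tendsto (fun T => ∫ s in T₀..T, h s) atTop atBot) :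
    Tendsto f atTop atBot := by
  set P : ℝ → ℝ := fun T => ∫ s in T₀..T, h s with hP
  have hPd : ∀ t > T₀, HasDerivAt P (h t) t := by
    intro t ht
    have hsub : Set.uIcc T₀ t ⊆ Set.Ici T₀ := by
      rw [Set.uIcc_of_le ht.le]; exact Set.Icc_subset_Ici_self
    have hint : IntervalIntegrable h MeasureTheory.volume T₀ t :=
      (hh.mono hsub).intervalIntegrable
    have hca : ContinuousAt h t := (hh t ht.le).continuousAt (Ici_mem_nhds ht)
    have hmeas : StronglyMeasurableAtFilter h (𝓝 t) :=
      ContinuousAt.stronglyMeasurableAtFilter isOpen_Ioi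
        (fun x hx => (hh x (le_of_lt hx)).continuousAt (Ici_mem_nhds hx)) t ht
    exact intervalIntegral.integral_hasDerivAt_right hint hmeas hca
  have hanti : AntitoneOn (fun t => f t - P t) (Set.Ioi T₀) := by
    have hint : interior (Set.Ioi T₀) = Set.Ioi T₀ := interior_Ioi
    apply antitoneOn_of_deriv_nonpos (convex_Ioi T₀)
    · intro x hx
      exact ((hf x hx).sub (hPd x hx).differentiableAt).continuousAt.continuousWithinAt
    · rw [hint]
      intro x hx
      exact ((hf x hx).sub (hPd x hx).differentiableAt).differentiableWithinAt
    · rw [hint]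
      intro x hx
      rw [deriv_fun_sub (hf x hx) (hPd x hx).differentiableAt, (hPd x hx).deriv]
      linarith [hle x hx]
  have hbound : ∀ᶠ T in atTop, f T ≤ (f (T₀ + 1) - P (T₀ + 1)) + P T := by
    filter_upwards [eventually_ge_atTop (T₀ + 1)] with T hT
    have h1 : (T₀ + 1) ∈ Set.Ioi T₀ := by simp
    have h2 : T ∈ Set.Ioi T₀ := by simp only [Set.mem_Ioi]; linarith
    have := hanti h1 h2 hT
    simp only at this
    linarith
  exact tendsto_atBot_mono' atTop hbound (tendsto_atBot_add_const_left _ _ hdiv)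

lemma tail_div (g : ℝ → ℝ) (t₀ T₁ : ℝ) (h1 : t₀ ≤ T₁) (hg : ContinuousOn g (Set.Ici t₀))
    (hdiv : Tendsto (fun T => ∫ s in t₀..T, g s) atTop atTop) :
    Tendsto (fun T => ∫ s in T₁..T, g s) atTop atTop := by
  have key : ∀ᶠ T in atTop,
      (∫ s in t₀..T, g s) + (-∫ s in t₀..T₁, g s) = ∫ s in T₁..T, g s := by
    filter_upwards [eventually_ge_atTop T₁] with T hT
    have i1 : IntervalIntegrable g MeasureTheory.volume t₀ T₁ :=
      (hg.mono (by rw [Set.uIcc_of_le h1]; exact Set.Icc_subset_Ici_self)).intervalIntegrable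
    have i2 : IntervalIntegrable g MeasureTheory.volume T₁ T :=
      (hg.mono (by rw [Set.uIcc_of_le hT]
                   exact fun x hx => le_trans h1 hx.1)).intervalIntegrable
    rw [← intervalIntegral.integral_add_adjacent_intervals i1 i2]
    ring
  exact Tendsto.congr' key (tendsto_atTop_add_const_right _ _ hdiv)

theorem kiguradze_classification (α t₀ : ℝ) (a b u : ℝ → ℝ)
    (hα : 0 < α) (hα1 : α ≤ 1) (ht₀ : 0 < t₀)
    (ha : ContinuousOn a (Set.Ici t₀)) (hapos : ∀ t ∈ Set.Ici t₀, 0 < a t)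
    (hb : ContinuousOn b (Set.Ici t₀)) (hbpos : ∀ t ∈ Set.Ici t₀, 0 < b t)
    (hdivb : Tendsto (fun T => ∫ s in t₀..T, s ^ (α - 1) / b s) atTop atTop)
    (hdiva : Tendsto (fun T => ∫ s in t₀..T, s ^ (α - 1) / a s) atTop atTop)
    (hupos : ∃ T ≥ t₀, ∀ t ≥ T, 0 < u t)
    (hu : ∀ t ≥ t₀, DifferentiableAt ℝ u t)
    (hd1 : ∀ t ≥ t₀, DifferentiableAt ℝ (fun s => a s * katD α u s) t)
    (hd2 : ∀ t ≥ t₀,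
      DifferentiableAt ℝ (fun s => b s * katD α (fun x => a x * katD α u x) s) t)
    (hneg : ∀ t ≥ t₀,
      katD α (fun s => b s * katD α (fun x => a x * katD α u x) s) t ≤ 0)
    (hnz : ∀ T ≥ t₀, ∃ t ≥ T,
      katD α (fun s => b s * katD α (fun x => a x * katD α u x) s) t ≠ 0) :
    ∃ t₁ ≥ t₀,
      (∀ t ≥ t₁, 0 < u t ∧ 0 < katD α u t ∧
        0 < katD α (fun s => a s * katD α u s) t) ∨
      (∀ t ≥ t₁, 0 < u t ∧ katD α u t < 0 ∧
        0 < katD α (fun s => a s * katD α u s) t) := by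
  obtain ⟨Tu, hTu, hTupos⟩ := hupos
  set v : ℝ → ℝ := fun s => a s * katD α u s with hv
  set w : ℝ → ℝ := fun s => b s * katD α v s with hw
  have htpos : ∀ t : ℝ, t ≥ t₀ → (0:ℝ) < t := fun t ht => lt_of_lt_of_le ht₀ ht
  have hpow : ∀ t : ℝ, 0 < t → t ^ (α - 1) * t ^ (1 - α) = 1 := by
    intro t ht
    rw [← Real.rpow_add ht]
    norm_num
  have hderiv_eq : ∀ (f : ℝ → ℝ) (t : ℝ), 0 < t →
      deriv f t = t ^ (α - 1) * katD α f t := by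
    intro f t ht
    simp only [katD]
    rw [← mul_assoc, hpow t ht, one_mul]
  -- w has nonpositive derivative
  have hw' : ∀ t ≥ t₀, deriv w t ≤ 0 := by
    intro t ht
    have h1 := hneg t ht
    simp only [katD] at h1
    have h2 : (0:ℝ) < t ^ (1 - α) := Real.rpow_pos_of_pos (htpos t ht) _
    nlinarith
  have hwanti : AntitoneOn w (Set.Ici t₀) := by
    apply antitoneOn_of_deriv_nonpos (convex_Ici t₀)
    · exact fun x hx => (hd2 x hx).continuousAt.continuousWithinAt
    · rw [interior_Ici]
      exact fun x hx => (hd2 x (le_of_lt hx)).differentiableWithinAt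
    · rw [interior_Ici]
      exact fun x hx => hw' x (le_of_lt hx)
  -- integrand continuity
  have hrpow_cont : ContinuousOn (fun s : ℝ => s ^ (α - 1)) (Set.Ici t₀) := by
    intro x hx
    exact (Real.continuousAt_rpow_const x _ (Or.inl (ne_of_gt (htpos x hx)))).continuousWithinAt
  have hcontb : ContinuousOn (fun s : ℝ => s ^ (α - 1) / b s) (Set.Ici t₀) :=
    hrpow_cont.div hb (fun x hx => (hbpos x hx).ne')
  have hconta : ContinuousOn (fun s : ℝ => s ^ (α - 1) / a s) (Set.Ici t₀) :=
    hrpow_cont.div ha (fun x hx => (hapos x hx).ne')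
  have hkv_eq : ∀ t ≥ t₀, katD α v t = w t / b t := by
    intro t ht
    have hbt : (0:ℝ) < b t := hbpos t ht
    have hwt : w t = b t * katD α v t := rfl
    rw [hwt, mul_comm, mul_div_assoc, div_self hbt.ne', mul_one]
  have hku_eq : ∀ t ≥ t₀, katD α u t = v t / a t := by
    intro t ht
    have hat : (0:ℝ) < a t := hapos t ht
    have hvt : v t = a t * katD α u t := rfl
    rw [hvt, mul_comm, mul_div_assoc, div_self hat.ne', mul_one]
  -- Step A : w is positive on [t₀, ∞)
  have hwpos : ∀ t ≥ t₀, 0 < w t := by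
    by_contra hcon
    push_neg at hcon
    obtain ⟨t₂, ht₂, hwt₂⟩ := hcon
    obtain ⟨t₃, ht₃, hkne⟩ := hnz t₂ ht₂
    have ht₃' : t₃ ≥ t₀ := le_trans ht₂ ht₃
    have hderne : deriv w t₃ ≠ 0 := by
      intro h0
      apply hkne
      simp only [katD, h0, mul_zero]
    have hderlt : deriv w t₃ < 0 := lt_of_le_of_ne (hw' t₃ ht₃') hderne
    have hslope := (hd2 t₃ ht₃').hasDerivAt
    rw [hasDerivAt_iff_tendsto_slope] at hslope
    have hslope' : Tendsto (slope w t₃) (𝓝[>] t₃) (𝓝 (deriv w t₃)) :=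
      hslope.mono_left (nhdsWithin_mono _ (fun y hy => ne_of_gt hy))
    have hev : ∀ᶠ y in 𝓝[>] t₃, slope w t₃ y < 0 :=
      hslope'.eventually (Iio_mem_nhds hderlt)
    obtain ⟨t₄, hs4, ht₄gt⟩ := (hev.and eventually_mem_nhdsWithin).exists
    have ht₄gt' : t₃ < t₄ := ht₄gt
    have hw43 : w t₄ < w t₃ := by
      rw [slope_def_field] at hs4
      rcases div_neg_iff.mp hs4 with ⟨h1, h2⟩ | ⟨h1, h2⟩
      · linarith
      · linarith
    have ht₄' : t₄ ≥ t₀ := le_trans ht₃' (le_of_lt ht₄gt')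
    have hwc : w t₄ < 0 := lt_of_lt_of_le hw43 (le_trans (hwanti ht₂ ht₃' ht₃) hwt₂)
    have hwle : ∀ t ≥ t₄, w t ≤ w t₄ := fun t ht =>
      hwanti (Set.mem_Ici.mpr ht₄') (Set.mem_Ici.mpr (le_trans ht₄' ht)) ht
    have hIci4 : Set.Ici t₄ ⊆ Set.Ici t₀ := Set.Ici_subset_Ici.mpr ht₄'
    -- v tends to -∞
    have hVtend : Tendsto v atTop atBot := by
      apply decay_lemma v (fun s => w t₄ * (s ^ (α - 1) / b s)) t₄
      · exact fun t ht => hd1 t (le_trans ht₄' (le_of_lt ht))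
      · exact continuousOn_const.mul (hcontb.mono hIci4)
      · intro t ht
        have ht0 : t ≥ t₀ := le_trans ht₄' (le_of_lt ht)
        have htp : (0:ℝ) < t := htpos t ht0
        have hbt : (0:ℝ) < b t := hbpos t ht0
        have hrp : (0:ℝ) < t ^ (α - 1) := Real.rpow_pos_of_pos htp _
        have hwt : w t ≤ w t₄ := hwle t (le_of_lt ht)
        rw [hderiv_eq v t htp, hkv_eq t ht0]
        have e1 : t ^ (α - 1) * (w t / b t) = t ^ (α - 1) * w t / b t := by ring
        have e2 : w t₄ * (t ^ (α - 1) / b t) = t ^ (α - 1) * w t₄ / b t := by ring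
        rw [e1, e2, div_le_div_iff₀ hbt hbt]
        exact mul_le_mul_of_nonneg_right (mul_le_mul_of_nonneg_left hwt hrp.le) hbt.le
      · have := tail_div _ t₀ t₄ ht₄' hcontb hdivb
        have h2 : Tendsto (fun T => w t₄ * ∫ s in t₄..T, s ^ (α - 1) / b s) atTop atBot :=
          (tendsto_const_mul_atBot_of_neg hwc).mpr this
        refine h2.congr (fun T => ?_)
        rw [← intervalIntegral.integral_const_mul]
    -- v is antitone on [t₄, ∞)
    have hvanti : AntitoneOn v (Set.Ici t₄) := by
      apply antitoneOn_of_deriv_nonpos (convex_Ici t₄)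
      · exact fun x hx => (hd1 x (hIci4 hx)).continuousAt.continuousWithinAt
      · rw [interior_Ici]
        exact fun x hx => (hd1 x (hIci4 (Set.mem_Ici.mpr (le_of_lt hx)))).differentiableWithinAt
      · rw [interior_Ici]
        intro x hx
        have hx0 : x ≥ t₀ := hIci4 (Set.mem_Ici.mpr (le_of_lt hx))
        have hxp : (0:ℝ) < x := htpos x hx0
        rw [hderiv_eq v x hxp, hkv_eq x hx0]
        have hwx : w x ≤ w t₄ := hwle x (le_of_lt hx)
        have hrp : (0:ℝ) < x ^ (α - 1) := Real.rpow_pos_of_pos hxp _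
        have hbx : (0:ℝ) < b x := hbpos x hx0
        have : w x / b x ≤ 0 := div_nonpos_iff.mpr (Or.inr ⟨by linarith, hbx.le⟩)
        nlinarith
    -- find t₅ with v t₅ < 0
    obtain ⟨t₅, ⟨hv5, ht₅4⟩⟩ :=
      ((hVtend.eventually (eventually_le_atBot (-1))).and (eventually_ge_atTop t₄)).exists
    have ht₅' : t₅ ≥ t₀ := le_trans ht₄' ht₅4
    have hv5neg : v t₅ < 0 := lt_of_le_of_lt hv5 (by norm_num)
    have hvle : ∀ t ≥ t₅, v t ≤ v t₅ := fun t ht =>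
      hvanti (Set.mem_Ici.mpr ht₅4) (Set.mem_Ici.mpr (le_trans ht₅4 ht)) ht
    have hIci5 : Set.Ici t₅ ⊆ Set.Ici t₀ := Set.Ici_subset_Ici.mpr ht₅'
    -- u tends to -∞
    have hUtend : Tendsto u atTop atBot := by
      apply decay_lemma u (fun s => v t₅ * (s ^ (α - 1) / a s)) t₅
      · exact fun t ht => hu t (le_trans ht₅' (le_of_lt ht))
      · exact continuousOn_const.mul (hconta.mono hIci5)
      · intro t ht
        have ht0 : t ≥ t₀ := le_trans ht₅' (le_of_lt ht)
        have htp : (0:ℝ) < t := htpos t ht0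
        have hat : (0:ℝ) < a t := hapos t ht0
        have hrp : (0:ℝ) < t ^ (α - 1) := Real.rpow_pos_of_pos htp _
        have hvt : v t ≤ v t₅ := hvle t (le_of_lt ht)
        rw [hderiv_eq u t htp, hku_eq t ht0]
        have e1 : t ^ (α - 1) * (v t / a t) = t ^ (α - 1) * v t / a t := by ring
        have e2 : v t₅ * (t ^ (α - 1) / a t) = t ^ (α - 1) * v t₅ / a t := by ring
        rw [e1, e2, div_le_div_iff₀ hat hat]
        exact mul_le_mul_of_nonneg_right (mul_le_mul_of_nonneg_left hvt hrp.le) hat.le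
      · have := tail_div _ t₀ t₅ ht₅' hconta hdiva
        have h2 : Tendsto (fun T => v t₅ * ∫ s in t₅..T, s ^ (α - 1) / a s) atTop atBot :=
          (tendsto_const_mul_atBot_of_neg hv5neg).mpr this
        refine h2.congr (fun T => ?_)
        rw [← intervalIntegral.integral_const_mul]
    obtain ⟨t₆, ⟨hu6, ht₆⟩⟩ :=
      ((hUtend.eventually (eventually_le_atBot (-1))).and (eventually_ge_atTop Tu)).exists
    linarith [hTupos t₆ ht₆]
  -- Step B
  have hkvpos : ∀ t ≥ t₀, 0 < katD α v t := by
    intro t ht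
    have hwt : w t = b t * katD α v t := rfl
    have h1 := hwpos t ht
    rw [hwt] at h1
    nlinarith [hbpos t ht]
  have hvmono : StrictMonoOn v (Set.Ici t₀) := by
    apply strictMonoOn_of_deriv_pos (convex_Ici t₀)
    · exact fun x hx => (hd1 x hx).continuousAt.continuousWithinAt
    · rw [interior_Ici]
      intro x hx
      have hxp : (0:ℝ) < x := htpos x (le_of_lt hx)
      rw [hderiv_eq v x hxp]
      exact mul_pos (Real.rpow_pos_of_pos hxp _) (hkvpos x (le_of_lt hx))
  by_cases hcase : ∃ t₂ ≥ t₀, 0 ≤ v t₂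
  · obtain ⟨t₂, ht₂, hv2⟩ := hcase
    refine ⟨max Tu (t₂ + 1), le_trans hTu (le_max_left _ _), Or.inl ?_⟩
    intro t ht
    have htTu : t ≥ Tu := le_trans (le_max_left _ _) ht
    have ht2 : t ≥ t₂ + 1 := le_trans (le_max_right _ _) ht
    have ht0 : t ≥ t₀ := le_trans ht₂ (by linarith)
    have hvt : 0 < v t :=
      lt_of_le_of_lt hv2 (hvmono (Set.mem_Ici.mpr ht₂) (Set.mem_Ici.mpr ht0) (by linarith))
    refine ⟨hTupos t htTu, ?_, ?_⟩
    · have hva : v t = a t * katD α u t := rfl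
      rw [hva] at hvt
      nlinarith [hapos t ht0]
    · exact hkvpos t ht0
  · push_neg at hcase
    refine ⟨max Tu t₀, le_max_right _ _, Or.inr ?_⟩
    intro t ht
    have htTu : t ≥ Tu := le_trans (le_max_left _ _) ht
    have ht0 : t ≥ t₀ := le_trans (le_max_right _ _) ht
    have hvt : v t < 0 := hcase t ht0
    refine ⟨hTupos t htTu, ?_, ?_⟩
    · have hva : v t = a t * katD α u t := rfl
      rw [hva] at hvt
      nlinarith [hapos t ht0]
    · exact hkvpos t ht0
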